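/- Let (F,G) be a WZ pair and s, t ≥ 1 integers. Define F_{s,t}(n,k) = Σ_{j=0}^{t-1} F(sn, tk+j) and G_{s,t}(n,k) = Σ_{i=0}^{s-1} G(sn+i, tk). Then (F_{s,t}, G_{s,t}) is also a WZ pair: F_{s,t}(n+1,k) - F_{s,t}(n,k) = G_{s,t}(n,k+1) - G_{s,t}(n,k). -/

import Mathlib

theorem wz_pair_double_dilation (F G : ℕ → ℕ → ℝ)
    (hWZ : ∀ n k, F (n + 1) k - F n k = G n (k + 1) - G n k)
    (s t : ℕ) (hs : 1 ≤ s) (ht : 1 ≤ t) :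
    ∀ n k,
      (∑ j ∈ Finset.range t, F (s * (n + 1)) (t * k + j)) -
      (∑ j ∈ Finset.range t, F (s * n) (t * k + j)) =
      (∑ i ∈ Finset.range s, G (s * n + i) (t * (k + 1))) -
      (∑ i ∈ Finset.range s, G (s * n + i) (t * k)) := by
  intro n k
  rw [← Finset.sum_sub_distrib, ← Finset.sum_sub_distrib]
  have key : ∀ j, F (s * (n + 1)) (t * k + j) - F (s * n) (t * k + j)
      = ∑ i ∈ Finset.range s, (G (s * n + i) (t * k + j + 1) - G (s * n + i) (t * k + j)) := by
    intro j
    have h := Finset.sum_range_sub (fun i => F (s * n + i) (t * k + j)) s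
    have h2 : ∀ i, F (s * n + i + 1) (t * k + j) - F (s * n + i) (t * k + j)
        = G (s * n + i) (t * k + j + 1) - G (s * n + i) (t * k + j) := fun i => hWZ _ _
    simp only [← add_assoc] at h
    simp only [h2] at h
    simp only [Nat.add_zero] at h
    rw [show s * (n + 1) = s * n + s by ring, ← h]
  calc (∑ j ∈ Finset.range t, (F (s * (n + 1)) (t * k + j) - F (s * n) (t * k + j)))
      = ∑ j ∈ Finset.range t, ∑ i ∈ Finset.range s,
          (G (s * n + i) (t * k + j + 1) - G (s * n + i) (t * k + j)) := by
        exact Finset.sum_congr rfl fun j _ => key j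
    _ = ∑ i ∈ Finset.range s, ∑ j ∈ Finset.range t,
          (G (s * n + i) (t * k + j + 1) - G (s * n + i) (t * k + j)) := Finset.sum_comm
    _ = ∑ i ∈ Finset.range s, (G (s * n + i) (t * (k + 1)) - G (s * n + i) (t * k)) := by
        refine Finset.sum_congr rfl fun i _ => ?_
        have h := Finset.sum_range_sub (fun j => G (s * n + i) (t * k + j)) t
        simp only [← add_assoc] at h
        rw [h, Nat.add_zero, show t * (k + 1) = t * k + t by ring]
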